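/- arXiv:1512.02549 — 5 statements merged into one kernel-verified Lean document; each statement's English description precedes it below -/
import Mathlib

section
/- Let F1 and F2 be faces of a closed convex cone K with F1 ⊊ F2 (strict inclusion of nonempty faces). Then dim(span F1) < dim(span F2). -/
/-- A closed convex cone as a set. -/
def IsClosedConvexCone {m : ℕ} (K : Set (EuclideanSpace ℝ (Fin m))) : Prop :=
  IsClosed K ∧ Convex ℝ K ∧ ∀ x ∈ K, ∀ t : ℝ, 0 ≤ t → t • x ∈ K

/-- A face of a convex cone: a convex subcone `F` such that whenever `x, y ∈ K` and
`x + y ∈ F`, then `x, y ∈ F`. -/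
def IsFace {m : ℕ} (K F : Set (EuclideanSpace ℝ (Fin m))) : Prop :=
  F ⊆ K ∧ Convex ℝ F ∧ (∀ x ∈ F, ∀ t : ℝ, 0 ≤ t → t • x ∈ F) ∧
    ∀ x ∈ K, ∀ y ∈ K, x + y ∈ F → x ∈ F ∧ y ∈ F

/-- Strict inclusion of nonempty faces strictly increases the dimension of the span. -/
theorem stmt4 {n : ℕ} (K F1 F2 : Set (EuclideanSpace ℝ (Fin n)))
    (hK : IsClosedConvexCone K) (h1 : IsFace K F1) (h2 : IsFace K F2)
    (h1ne : F1.Nonempty) (h2ne : F2.Nonempty) (hss : F1 ⊂ F2) :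
    Module.finrank ℝ (Submodule.span ℝ F1) < Module.finrank ℝ (Submodule.span ℝ F2) := by
  obtain ⟨hsub, hconv, hcone, hface⟩ := h1
  -- F1 contains 0 and is closed under addition
  have h0 : (0 : EuclideanSpace ℝ (Fin n)) ∈ F1 := by
    obtain ⟨x, hx⟩ := h1ne
    simpa using hcone x hx 0 le_rfl
  have hadd : ∀ x ∈ F1, ∀ y ∈ F1, x + y ∈ F1 := by
    intro x hx y hy
    have hmid : (1/2 : ℝ) • x + (1/2 : ℝ) • y ∈ F1 :=
      hconv hx hy (by norm_num) (by norm_num) (by norm_num)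
    have := hcone _ hmid 2 (by norm_num)
    have h2 : (2 : ℝ) • ((1/2 : ℝ) • x + (1/2 : ℝ) • y) = x + y := by
      rw [smul_add, smul_smul, smul_smul]; norm_num
    rwa [h2] at this
  -- every element of span F1 is a difference of elements of F1
  have hdiff : ∀ x ∈ Submodule.span ℝ F1, ∃ p ∈ F1, ∃ q ∈ F1, x = p - q := by
    intro x hx
    induction hx using Submodule.span_induction with
    | mem y hy => exact ⟨y, hy, 0, h0, by simp⟩
    | zero => exact ⟨0, h0, 0, h0, by simp⟩
    | add y z _ _ ihy ihz =>
      obtain ⟨p, hp, q, hq, rfl⟩ := ihy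
      obtain ⟨p', hp', q', hq', rfl⟩ := ihz
      exact ⟨p + p', hadd _ hp _ hp', q + q', hadd _ hq _ hq', by abel⟩
    | smul a y _ ih =>
      obtain ⟨p, hp, q, hq, rfl⟩ := ih
      rcases le_or_gt 0 a with ha | ha
      · exact ⟨a • p, hcone _ hp a ha, a • q, hcone _ hq a ha, by
          rw [smul_sub]⟩
      · refine ⟨(-a) • q, hcone _ hq _ (by linarith), (-a) • p, hcone _ hp _ (by linarith), ?_⟩
        rw [smul_sub]; module
  -- K ∩ span F1 ⊆ F1
  have hkey : ∀ x ∈ K, x ∈ Submodule.span ℝ F1 → x ∈ F1 := by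
    intro x hxK hxs
    obtain ⟨p, hp, q, hq, rfl⟩ := hdiff x hxs
    have : (p - q) + q ∈ F1 := by simpa using hp
    exact (hface _ hxK _ (hsub hq) this).1
  -- spans are strictly nested
  obtain ⟨x, hxF2, hxF1⟩ := Set.exists_of_ssubset hss
  have hle := hss.subset
  have hlt : Submodule.span ℝ F1 < Submodule.span ℝ F2 := by
    refine lt_of_le_of_ne (Submodule.span_mono hle) fun heq => ?_
    exact hxF1 (hkey x (h2.1 hxF2) (heq ▸ Submodule.subset_span hxF2))
  exact Submodule.finrank_lt_finrank_of_lt hlt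
end

section
/- Let K^1 and K^2 be closed convex cones and let F be a nonempty face of K^1 ∩ K^2. Let F^1 and F^2 be the minimal faces of K^1 and K^2 respectively containing F. Then F = F^1 ∩ F^2 and F* = (F^1)* + (F^2)* (the sum being closed). -/
open Pointwise

open scoped InnerProductSpace

theorem ConvexCone.hyperplane_separation_of_nonempty_of_isClosed_of_nmem {H : Type*}
    [NormedAddCommGroup H] [InnerProductSpace ℝ H] [CompleteSpace H] (K : ConvexCone ℝ H)
    (ne : (K : Set H).Nonempty) (hc : IsClosed (K : Set H)) {b : H} (disj : b ∉ K) :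
    ∃ y : H, (∀ x : H, x ∈ K → 0 ≤ ⟪x, y⟫_ℝ) ∧ ⟪y, b⟫_ℝ < 0 := by
  have hp : K.Pointed := by
    obtain ⟨x, hx⟩ := ne
    have h0 : Filter.Tendsto (fun n : ℕ => 1 / ((n:ℝ) + 1)) Filter.atTop (nhds 0) :=
      tendsto_one_div_add_atTop_nhds_zero_nat
    have ht : Filter.Tendsto (fun n : ℕ => (1 / ((n:ℝ) + 1)) • x) Filter.atTop (nhds 0) := by
      simpa using h0.smul_const x
    exact hc.mem_of_tendsto ht (Filter.Eventually.of_forall fun n => K.smul_mem (by positivity) hx)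
  let C : ProperCone ℝ H := ⟨K.toPointedCone hp, hc⟩
  obtain ⟨y, hy, hb⟩ := C.hyperplane_separation' (x₀ := b) disj
  exact ⟨y, fun x hx => hy x hx, by rwa [real_inner_comm] at hb⟩

section Auxiliary

variable {m : ℕ}

lemma cone_add_mem {s : Set (EuclideanSpace ℝ (Fin m))} (hconv : Convex ℝ s)
    (hcone : ∀ x ∈ s, ∀ t : ℝ, 0 ≤ t → t • x ∈ s)
    {x y : EuclideanSpace ℝ (Fin m)} (hx : x ∈ s) (hy : y ∈ s) : x + y ∈ s := by
  have h := hconv hx hy (by norm_num : (0:ℝ) ≤ 1/2) (by norm_num : (0:ℝ) ≤ 1/2) (by norm_num)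
  have h2 := hcone _ h 2 (by norm_num)
  have : (2:ℝ) • ((1/2 : ℝ) • x + (1/2 : ℝ) • y) = x + y := by
    rw [smul_add, smul_smul, smul_smul]; norm_num
  rwa [this] at h2

lemma cone_zero_mem {s : Set (EuclideanSpace ℝ (Fin m))}
    (hcone : ∀ x ∈ s, ∀ t : ℝ, 0 ≤ t → t • x ∈ s) (hne : s.Nonempty) : (0 : EuclideanSpace ℝ (Fin m)) ∈ s := by
  obtain ⟨x, hx⟩ := hne
  simpa using hcone x hx 0 le_rfl

/-- The explicit description of the minimal face of `K` containing the subcone `F`. -/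
lemma minimal_face_eq {K F F1 : Set (EuclideanSpace ℝ (Fin m))} (hK : IsClosedConvexCone K)
    (hFK : F ⊆ K) (hFconv : Convex ℝ F) (hFcone : ∀ x ∈ F, ∀ t : ℝ, 0 ≤ t → t • x ∈ F)
    (hFne : F.Nonempty)
    (hF1 : IsFace K F1) (hFF1 : F ⊆ F1)
    (hF1min : ∀ G, IsFace K G → F ⊆ G → F1 ⊆ G) :
    F1 = {y | y ∈ K ∧ ∃ x ∈ F, ∃ t : ℝ, 0 ≤ t ∧ t • x - y ∈ K} := by
  obtain ⟨hKcl, hKconv, hKcone⟩ := hK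
  set G : Set (EuclideanSpace ℝ (Fin m)) :=
    {y | y ∈ K ∧ ∃ x ∈ F, ∃ t : ℝ, 0 ≤ t ∧ t • x - y ∈ K} with hG
  have hGface : IsFace K G := by
    refine ⟨fun y hy => hy.1, ?_, ?_, ?_⟩
    · -- convex
      rintro y₁ ⟨hy₁K, x₁, hx₁, t₁, ht₁, hw₁⟩ y₂ ⟨hy₂K, x₂, hx₂, t₂, ht₂, hw₂⟩ a b ha hb hab
      refine ⟨hKconv hy₁K hy₂K ha hb hab, (a * t₁) • x₁ + (b * t₂) • x₂, ?_, 1, zero_le_one, ?_⟩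
      · exact cone_add_mem hFconv hFcone (hFcone _ hx₁ _ (mul_nonneg ha ht₁))
          (hFcone _ hx₂ _ (mul_nonneg hb ht₂))
      · have : (1:ℝ) • ((a * t₁) • x₁ + (b * t₂) • x₂) - (a • y₁ + b • y₂)
            = a • (t₁ • x₁ - y₁) + b • (t₂ • x₂ - y₂) := by
          simp [smul_sub, smul_smul, mul_comm]; abel
        rw [this]
        exact hKconv hw₁ hw₂ ha hb hab
    · -- cone
      rintro y ⟨hyK, x, hx, t, ht, hw⟩ c hc
      refine ⟨hKcone _ hyK c hc, x, hx, c * t, mul_nonneg hc ht, ?_⟩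
      have : (c * t) • x - c • y = c • (t • x - y) := by rw [smul_sub, smul_smul]
      rw [this]; exact hKcone _ hw c hc
    · -- face property
      rintro u hu v hv ⟨hK', x, hx, t, ht, hw⟩
      have hu' : u ∈ G := by
        refine ⟨hu, x, hx, t, ht, ?_⟩
        have : t • x - u = (t • x - (u + v)) + v := by abel
        rw [this]; exact cone_add_mem hKconv hKcone hw hv
      have hv' : v ∈ G := by
        refine ⟨hv, x, hx, t, ht, ?_⟩
        have : t • x - v = (t • x - (u + v)) + u := by abel
        rw [this]; exact cone_add_mem hKconv hKcone hw hu
      exact ⟨hu', hv'⟩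
  have hFG : F ⊆ G := by
    intro y hy
    refine ⟨hFK hy, y, hy, 1, zero_le_one, ?_⟩
    simp only [one_smul, sub_self]
    exact cone_zero_mem hKcone ⟨y, hFK hy⟩
  apply le_antisymm (hF1min G hGface hFG)
  -- G ⊆ F1
  rintro y ⟨hyK, x, hx, t, ht, hw⟩
  have hsum : y + (t • x - y) ∈ F1 := by
    have : y + (t • x - y) = t • x := by abel
    rw [this]; exact hF1.2.2.1 _ (hFF1 hx) t ht
  exact (hF1.2.2.2 y hyK _ hw hsum).1

lemma F1_mem_iff {K K' F F1 : Set (EuclideanSpace ℝ (Fin m))}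
    (hK : IsClosedConvexCone K) (hF : IsFace (K ∩ K') F) (hFne : F.Nonempty)
    (hF1 : IsFace K F1) (hFF1 : F ⊆ F1)
    (hF1min : ∀ G, IsFace K G → F ⊆ G → F1 ⊆ G) :
    ∀ y, y ∈ F1 ↔ y ∈ K ∧ ∃ x ∈ F, ∃ t : ℝ, 0 ≤ t ∧ t • x - y ∈ K := by
  intro y
  rw [minimal_face_eq hK (hF.1.trans Set.inter_subset_left) hF.2.1 hF.2.2.1 hFne hF1 hFF1 hF1min]
  rfl

section main
variable {K1 K2 F F1 F2 : Set (EuclideanSpace ℝ (Fin m))}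
  (hK1 : IsClosedConvexCone K1) (hK2 : IsClosedConvexCone K2)
  (hF : IsFace (K1 ∩ K2) F) (hFne : F.Nonempty)
  (hF1 : IsFace K1 F1) (hFF1 : F ⊆ F1)
  (hF1min : ∀ G, IsFace K1 G → F ⊆ G → F1 ⊆ G)
  (hF2 : IsFace K2 F2) (hFF2 : F ⊆ F2)
  (hF2min : ∀ G, IsFace K2 G → F ⊆ G → F2 ⊆ G)

include hK1 hK2 hF hFne hF1 hFF1 hF1min hF2 hFF2 hF2min in
lemma part1 : F = F1 ∩ F2 := by
  apply Set.Subset.antisymm (Set.subset_inter hFF1 hFF2)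
  rintro y ⟨hy1, hy2⟩
  obtain ⟨hyK1, x1, hx1, t1, ht1, hw1⟩ :=
    ((F1_mem_iff hK1 hF hFne hF1 hFF1 hF1min) y).1 hy1
  obtain ⟨hyK2, x2, hx2, t2, ht2, hw2⟩ :=
    ((F1_mem_iff hK2 (Set.inter_comm K1 K2 ▸ hF) hFne hF2 hFF2 hF2min) y).1 hy2
  set z := t1 • x1 + t2 • x2 with hz
  have hzF : z ∈ F := cone_add_mem hF.2.1 hF.2.2.1 (hF.2.2.1 _ hx1 _ ht1) (hF.2.2.1 _ hx2 _ ht2)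
  have hzy1 : z - y ∈ K1 := by
    have : z - y = (t1 • x1 - y) + t2 • x2 := by rw [hz]; abel
    rw [this]
    exact cone_add_mem hK1.2.1 hK1.2.2 hw1 (hF.1 (hF.2.2.1 _ hx2 _ ht2)).1
  have hzy2 : z - y ∈ K2 := by
    have : z - y = (t2 • x2 - y) + t1 • x1 := by rw [hz]; abel
    rw [this]
    exact cone_add_mem hK2.2.1 hK2.2.2 hw2 (hF.1 (hF.2.2.1 _ hx1 _ ht1)).2
  have hsum : y + (z - y) ∈ F := by
    have : y + (z - y) = z := by abel
    rwa [this]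
  exact (hF.2.2.2 y ⟨hyK1, hyK2⟩ _ ⟨hzy1, hzy2⟩ hsum).1

include hK1 hK2 hF hFne hF1 hFF1 hF1min hF2 hFF2 hF2min in
/-- If `y ∈ F1*` and `-y ∈ F2*` then `y` is orthogonal to both `F1` and `F2`. -/
lemma cancel_orth {y : EuclideanSpace ℝ (Fin m)}
    (h1 : ∀ x ∈ F1, 0 ≤ ⟪x, y⟫_ℝ) (h2 : ∀ x ∈ F2, ⟪x, y⟫_ℝ ≤ 0) :
    (∀ x ∈ F1, ⟪x, y⟫_ℝ = 0) ∧ ∀ x ∈ F2, ⟪x, y⟫_ℝ = 0 := by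
  have hF0 : ∀ x ∈ F, ⟪x, y⟫_ℝ = 0 := fun x hx =>
    le_antisymm (h2 x (hFF2 hx)) (h1 x (hFF1 hx))
  constructor
  · intro u hu
    obtain ⟨hyK1, x, hx, t, ht, hw⟩ := ((F1_mem_iff hK1 hF hFne hF1 hFF1 hF1min) u).1 hu
    -- t • x - u ∈ F1 by the face property
    have hsum : u + (t • x - u) ∈ F1 := by
      have : u + (t • x - u) = t • x := by abel
      rw [this]; exact hF1.2.2.1 _ (hFF1 hx) t ht
    have hwF1 : t • x - u ∈ F1 := (hF1.2.2.2 u hyK1 _ hw hsum).2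
    have h1u := h1 u hu
    have h1w := h1 _ hwF1
    have : ⟪t • x - u, y⟫_ℝ = t * ⟪x, y⟫_ℝ - ⟪u, y⟫_ℝ := by
      rw [inner_sub_left, real_inner_smul_left]
    rw [this, hF0 x hx, mul_zero, zero_sub, le_neg, neg_zero] at h1w
    linarith
  · intro u hu
    obtain ⟨hyK2, x, hx, t, ht, hw⟩ :=
      ((F1_mem_iff hK2 (Set.inter_comm K1 K2 ▸ hF) hFne hF2 hFF2 hF2min) u).1 hu
    have hsum : u + (t • x - u) ∈ F2 := by
      have : u + (t • x - u) = t • x := by abel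
      rw [this]; exact hF2.2.2.1 _ (hFF2 hx) t ht
    have hwF2 : t • x - u ∈ F2 := (hF2.2.2.2 u hyK2 _ hw hsum).2
    have h2u := h2 u hu
    have h2w := h2 _ hwF2
    have : ⟪t • x - u, y⟫_ℝ = t * ⟪x, y⟫_ℝ - ⟪u, y⟫_ℝ := by
      rw [inner_sub_left, real_inner_smul_left]
    rw [this, hF0 x hx, mul_zero, zero_sub] at h2w
    linarith
end main

/-- A nonempty face of a closed convex cone is closed. -/
lemma face_isClosed {K G : Set (EuclideanSpace ℝ (Fin m))} (hK : IsClosedConvexCone K)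
    (hG : IsFace K G) (hne : G.Nonempty) : IsClosed G := by
  obtain ⟨hGK, hGconv, hGcone, hGface⟩ := hG
  have h0 : (0 : EuclideanSpace ℝ (Fin m)) ∈ G := cone_zero_mem hGcone hne
  set V : Submodule ℝ (EuclideanSpace ℝ (Fin m)) := Submodule.span ℝ G with hV
  have hVcl : IsClosed (V : Set (EuclideanSpace ℝ (Fin m))) :=
    Submodule.closed_of_finiteDimensional V
  set G' : Set V := Subtype.val ⁻¹' G with hG'
  have hG'conv : Convex ℝ G' := hGconv.linear_preimage (V.subtype)
  have hG'span : Submodule.span ℝ G' = (⊤ : Submodule ℝ V) := by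
    apply Submodule.map_injective_of_injective (V.injective_subtype)
    rw [Submodule.map_span, Submodule.map_top, Submodule.range_subtype]
    congr 1
    exact Set.image_preimage_eq_of_subset (fun x hx => ⟨⟨x, Submodule.subset_span hx⟩, rfl⟩)
  have hG'aff : affineSpan ℝ G' = ⊤ := by
    have h0' : (0 : V) ∈ G' := h0
    have haff : (affineSpan ℝ (insert (0:V) G') : Set V) = (Submodule.span ℝ G' : Set V) :=
      affineSpan_insert_zero _
    rw [Set.insert_eq_of_mem h0'] at haff
    rw [← AffineSubspace.coe_eq_univ_iff, haff, hG'span, Submodule.top_coe]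
  obtain ⟨xb, hxb⟩ := hG'conv.interior_nonempty_iff_affineSpan_eq_top.2 hG'aff
  rw [← isSeqClosed_iff_isClosed]
  intro u y hu huy
  -- the limit lies in K and in V
  have hyK : y ∈ K := hK.1.mem_of_tendsto huy (Filter.Eventually.of_forall fun n => hGK (hu n))
  have hyV : y ∈ V := hVcl.mem_of_tendsto huy
    (Filter.Eventually.of_forall fun n => Submodule.subset_span (hu n))
  -- the limit, viewed in V, lies in the closure of G'
  have hyG' : (⟨y, hyV⟩ : V) ∈ closure G' := by
    have htd : Filter.Tendsto (fun n => (⟨u n, Submodule.subset_span (hu n)⟩ : V))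
        Filter.atTop (nhds (⟨y, hyV⟩ : V)) := by
      rw [tendsto_subtype_rng]
      exact huy
    exact mem_closure_of_tendsto htd (Filter.Eventually.of_forall fun n => hu n)
  -- midpoint of xb and y is in the interior of G', hence in G
  have hmid : (1/2 : ℝ) • xb + (1/2 : ℝ) • (⟨y, hyV⟩ : V) ∈ interior G' :=
    hG'conv.combo_interior_closure_mem_interior hxb hyG' (by norm_num) (by norm_num) (by norm_num)
  have hmidG : ((1/2 : ℝ) • (xb : EuclideanSpace ℝ (Fin m)) + (1/2 : ℝ) • y) ∈ G := by
    have := interior_subset hmid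
    simpa [hG'] using this
  -- scale up and use the face property
  have hsum : (xb : EuclideanSpace ℝ (Fin m)) + y ∈ G := by
    have h2 := hGcone _ hmidG 2 (by norm_num)
    have : (2:ℝ) • ((1/2 : ℝ) • (xb : EuclideanSpace ℝ (Fin m)) + (1/2 : ℝ) • y)
        = (xb : EuclideanSpace ℝ (Fin m)) + y := by
      rw [smul_add, smul_smul, smul_smul]; norm_num
    rwa [this] at h2
  have hxbG' : xb ∈ G' := interior_subset hxb
  have hxbG : (xb : EuclideanSpace ℝ (Fin m)) ∈ G := hxbG' 
  exact (hGface _ (hGK hxbG) y hyK hsum).2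

/-- If the only cancelling directions between `F1*` and `F2*` are orthogonal to `F1 ∪ F2`,
then `F1* + F2*` is closed. -/
lemma dual_sum_isClosed {F1 F2 : Set (EuclideanSpace ℝ (Fin m))}
    (hcancel : ∀ y : EuclideanSpace ℝ (Fin m),
      y ∈ ProperCone.innerDual F1 → -y ∈ ProperCone.innerDual F2 →
      (∀ x ∈ F1, ⟪x, y⟫_ℝ = 0) ∧ (∀ x ∈ F2, ⟪x, y⟫_ℝ = 0)) :
    IsClosed ((ProperCone.innerDual F1 : Set (EuclideanSpace ℝ (Fin m))) +
      (ProperCone.innerDual F2 : Set (EuclideanSpace ℝ (Fin m)))) := by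
  classical
  have hAcl : IsClosed (ProperCone.innerDual F1 : Set (EuclideanSpace ℝ (Fin m))) :=
    (ProperCone.innerDual F1).isClosed
  have hBcl : IsClosed (ProperCone.innerDual F2 : Set (EuclideanSpace ℝ (Fin m))) :=
    (ProperCone.innerDual F2).isClosed
  set M : Submodule ℝ (EuclideanSpace ℝ (Fin m)) := Submodule.span ℝ (F1 ∪ F2) with hM
  have hMcl : IsClosed (M : Set (EuclideanSpace ℝ (Fin m))) :=
    Submodule.closed_of_finiteDimensional M
  have hF1M : F1 ⊆ (M : Set (EuclideanSpace ℝ (Fin m))) :=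
    fun x hx => Submodule.subset_span (Or.inl hx)
  have hF2M : F2 ⊆ (M : Set (EuclideanSpace ℝ (Fin m))) :=
    fun x hx => Submodule.subset_span (Or.inr hx)
  -- a cancelling direction inside M is zero
  have hzero : ∀ d : EuclideanSpace ℝ (Fin m),
      d ∈ ProperCone.innerDual F1 → -d ∈ ProperCone.innerDual F2 → d ∈ M → d = 0 := by
    intro d hdA hdB hdM
    obtain ⟨o1, o2⟩ := hcancel d hdA hdB
    have hker : M ≤ LinearMap.ker ((innerSL ℝ d).toLinearMap) := by
      rw [hM, Submodule.span_le]
      rintro x (hx | hx) <;>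
        simp only [SetLike.mem_coe, LinearMap.mem_ker, ContinuousLinearMap.coe_coe,
          innerSL_apply_apply]
      · rw [real_inner_comm]; exact o1 x hx
      · rw [real_inner_comm]; exact o2 x hx
    have hdd : ⟪d, d⟫_ℝ = 0 := by
      have := hker hdM
      simpa using this
    exact inner_self_eq_zero.mp hdd
  -- the key uniform estimate
  have hest : ∃ c : ℝ, 0 < c ∧ ∀ a ∈ (ProperCone.innerDual F1 : Set (EuclideanSpace ℝ (Fin m))) ∩ M,
      ∀ b ∈ (ProperCone.innerDual F2 : Set (EuclideanSpace ℝ (Fin m))), c * ‖a‖ ≤ ‖a + b‖ := by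
    by_contra hcon
    push_neg at hcon
    have hseq : ∀ k : ℕ, ∃ a ∈ (ProperCone.innerDual F1 : Set (EuclideanSpace ℝ (Fin m))) ∩ M,
        ∃ b ∈ (ProperCone.innerDual F2 : Set (EuclideanSpace ℝ (Fin m))),
        ‖a + b‖ < (1 / (k + 1 : ℝ)) * ‖a‖ := by
      intro k
      obtain ⟨a, ha, b, hb, h⟩ := hcon (1 / (k + 1 : ℝ)) (by positivity)
      exact ⟨a, ha, b, hb, h⟩
    choose a ha b hb hab using hseq
    have hane : ∀ k, a k ≠ 0 := by
      intro k h0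
      have h1 := hab k
      rw [h0, norm_zero, mul_zero, zero_add] at h1
      exact absurd h1 (norm_nonneg _).not_gt
    have hnorm_a : ∀ k, (0:ℝ) < ‖a k‖ := fun k => norm_pos_iff.2 (hane k)
    set u : ℕ → EuclideanSpace ℝ (Fin m) := fun k => (‖a k‖)⁻¹ • a k with hu
    set v : ℕ → EuclideanSpace ℝ (Fin m) := fun k => (‖a k‖)⁻¹ • b k with hv
    have huA : ∀ k, u k ∈ (ProperCone.innerDual F1 : Set (EuclideanSpace ℝ (Fin m))) ∩ M := by
      intro k
      constructor
      · rw [SetLike.mem_coe, ProperCone.mem_innerDual]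
        intro x hx
        rw [real_inner_smul_right]
        exact mul_nonneg (by positivity) (ProperCone.mem_innerDual.1 (ha k).1 hx)
      · exact Submodule.smul_mem M _ (ha k).2
    have hvB : ∀ k, v k ∈ (ProperCone.innerDual F2 : Set (EuclideanSpace ℝ (Fin m))) := by
      intro k
      rw [SetLike.mem_coe, ProperCone.mem_innerDual]
      intro x hx
      rw [real_inner_smul_right]
      exact mul_nonneg (by positivity) (ProperCone.mem_innerDual.1 (hb k) hx)
    have hunorm : ∀ k, ‖u k‖ = 1 := by
      intro k
      rw [hu]
      simp only [norm_smul, norm_inv, norm_norm]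
      exact inv_mul_cancel₀ (hnorm_a k).ne'
    have huv : Filter.Tendsto (fun k => u k + v k) Filter.atTop (nhds 0) := by
      rw [tendsto_zero_iff_norm_tendsto_zero]
      have hb2 : ∀ k, ‖u k + v k‖ ≤ 1 / (k + 1 : ℝ) := by
        intro k
        have he : u k + v k = (‖a k‖)⁻¹ • (a k + b k) := by rw [hu, hv, smul_add]
        rw [he, norm_smul, norm_inv, norm_norm, inv_mul_le_iff₀ (hnorm_a k)]
        have h3 := (hab k).le
        rw [mul_comm]
        exact h3
      refine squeeze_zero (fun k => norm_nonneg _) hb2 ?_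
      exact tendsto_one_div_add_atTop_nhds_zero_nat
    have hS : IsCompact (Metric.sphere (0 : EuclideanSpace ℝ (Fin m)) 1 ∩
        ((ProperCone.innerDual F1 : Set (EuclideanSpace ℝ (Fin m))) ∩ M)) :=
      (isCompact_sphere 0 1).inter_right (hAcl.inter hMcl)
    have humem : ∀ k, u k ∈ Metric.sphere (0 : EuclideanSpace ℝ (Fin m)) 1 ∩
        ((ProperCone.innerDual F1 : Set (EuclideanSpace ℝ (Fin m))) ∩ M) :=
      fun k => ⟨by simp [hunorm k], huA k⟩
    obtain ⟨d, hd, φ, hφ, hud⟩ := hS.tendsto_subseq humem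
    have hvd : Filter.Tendsto (fun k => v (φ k)) Filter.atTop (nhds (-d)) := by
      have he : (fun k => v (φ k)) = fun k => (u (φ k) + v (φ k)) - u (φ k) := by
        funext k; abel
      rw [he]
      have h1 : Filter.Tendsto (fun k => u (φ k) + v (φ k)) Filter.atTop (nhds 0) :=
        huv.comp hφ.tendsto_atTop
      simpa using h1.sub hud
    have hdB : -d ∈ ProperCone.innerDual F2 :=
      hBcl.mem_of_tendsto hvd (Filter.Eventually.of_forall fun k => hvB _)
    have hd0 : d = 0 := hzero d hd.2.1 hdB hd.2.2
    have hd1 : ‖d‖ = 1 := by simpa using hd.1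
    rw [hd0, norm_zero] at hd1
    norm_num at hd1
  obtain ⟨c, hc, hest⟩ := hest
  -- sequential closedness
  rw [← isSeqClosed_iff_isClosed]
  intro s l hs hsl
  choose p hp q hq hpq using fun k => Set.mem_add.1 (hs k)
  set r : ℕ → EuclideanSpace ℝ (Fin m) :=
    fun k => p k - (M.orthogonalProjectionOnto (p k) : EuclideanSpace ℝ (Fin m)) with hr
  have hrM : ∀ k, r k ∈ Mᗮ := fun k => M.sub_starProjection_mem_orthogonal (p k)
  set p' : ℕ → EuclideanSpace ℝ (Fin m) :=
    fun k => (M.orthogonalProjectionOnto (p k) : EuclideanSpace ℝ (Fin m)) with hp'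
  set q' : ℕ → EuclideanSpace ℝ (Fin m) := fun k => q k + r k with hq'
  have hp'eq : ∀ k, p' k = p k - r k := by
    intro k; rw [hp', hr, sub_sub_cancel]
  have hp'A : ∀ k, p' k ∈ (ProperCone.innerDual F1 : Set (EuclideanSpace ℝ (Fin m))) ∩ M := by
    intro k
    refine ⟨?_, SetLike.coe_mem _⟩
    rw [SetLike.mem_coe, ProperCone.mem_innerDual]
    intro x hx
    rw [hp'eq k, inner_sub_right, (hrM k) x (hF1M hx), sub_zero]
    exact ProperCone.mem_innerDual.1 (hp k) hx
  have hq'B : ∀ k, q' k ∈ (ProperCone.innerDual F2 : Set (EuclideanSpace ℝ (Fin m))) := by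
    intro k
    rw [SetLike.mem_coe, ProperCone.mem_innerDual]
    intro x hx
    rw [hq', inner_add_right, (hrM k) x (hF2M hx), add_zero]
    exact ProperCone.mem_innerDual.1 (hq k) hx
  have hsum : ∀ k, p' k + q' k = s k := by
    intro k
    rw [hp'eq k, hq', ← hpq k, sub_add_eq_add_sub, add_sub_assoc, add_sub_cancel_right]
  obtain ⟨R, hR⟩ : ∃ R : ℝ, ∀ k, ‖s k‖ ≤ R := by
    have hbdd : Bornology.IsBounded (Set.range s) := Metric.isBounded_range_of_tendsto s hsl
    obtain ⟨R, hR⟩ := hbdd.subset_closedBall 0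
    exact ⟨R, fun k => by simpa [mem_closedBall_zero_iff] using hR ⟨k, rfl⟩⟩
  have hp'bdd : ∀ k, ‖p' k‖ ≤ R / c := by
    intro k
    have h1 : c * ‖p' k‖ ≤ ‖p' k + q' k‖ := hest _ (hp'A k) _ (hq'B k)
    rw [hsum k] at h1
    rw [le_div_iff₀ hc, mul_comm]
    exact h1.trans (hR k)
  have hScomp : IsCompact (Metric.closedBall (0 : EuclideanSpace ℝ (Fin m)) (R / c) ∩
      ((ProperCone.innerDual F1 : Set (EuclideanSpace ℝ (Fin m))) ∩ M)) :=
    (isCompact_closedBall 0 _).inter_right (hAcl.inter hMcl)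
  have hmem : ∀ k, p' k ∈ Metric.closedBall (0 : EuclideanSpace ℝ (Fin m)) (R / c) ∩
      ((ProperCone.innerDual F1 : Set (EuclideanSpace ℝ (Fin m))) ∩ M) :=
    fun k => ⟨by simpa [mem_closedBall_zero_iff] using hp'bdd k, hp'A k⟩
  obtain ⟨a, hamem, φ, hφ, hpa⟩ := hScomp.tendsto_subseq hmem
  have hqa : Filter.Tendsto (fun k => q' (φ k)) Filter.atTop (nhds (l - a)) := by
    have he : (fun k => q' (φ k)) = fun k => s (φ k) - p' (φ k) := by
      funext k
      rw [← hsum (φ k)]; abel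
    rw [he]
    exact (hsl.comp hφ.tendsto_atTop).sub hpa
  have hlaB : l - a ∈ (ProperCone.innerDual F2 : Set (EuclideanSpace ℝ (Fin m))) :=
    hBcl.mem_of_tendsto hqa (Filter.Eventually.of_forall fun k => hq'B _)
  exact Set.mem_add.2 ⟨a, hamem.2.1, l - a, hlaB, by abel⟩

/-- A nonempty face of a closed convex cone, as a `ConvexCone`. -/
noncomputable def faceCone {K G : Set (EuclideanSpace ℝ (Fin m))} (hG : IsFace K G) (hne : G.Nonempty) :
    ConvexCone ℝ (EuclideanSpace ℝ (Fin m)) where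
  carrier := G
  smul_mem' := fun _ hc _ hx => hG.2.2.1 _ hx _ (le_of_lt hc)
  add_mem' := fun _ hx _ hy => cone_add_mem hG.2.1 hG.2.2.1 hx hy

end Auxiliary

/-- If `F` is a nonempty face of `K¹ ∩ K²` and `F¹`, `F²` are the minimal faces of
`K¹`, `K²` containing `F`, then `F = F¹ ∩ F²` and `F* = (F¹)* + (F²)*`. -/
theorem stmt5 {n : ℕ} (K1 K2 F F1 F2 : Set (EuclideanSpace ℝ (Fin n)))
    (hK1 : IsClosedConvexCone K1) (hK2 : IsClosedConvexCone K2)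
    (hF : IsFace (K1 ∩ K2) F) (hFne : F.Nonempty)
    (hF1 : IsFace K1 F1) (hFF1 : F ⊆ F1)
    (hF1min : ∀ G, IsFace K1 G → F ⊆ G → F1 ⊆ G)
    (hF2 : IsFace K2 F2) (hFF2 : F ⊆ F2)
    (hF2min : ∀ G, IsFace K2 G → F ⊆ G → F2 ⊆ G) :
    F = F1 ∩ F2 ∧
      (ProperCone.innerDual F : Set (EuclideanSpace ℝ (Fin n))) =
        (ProperCone.innerDual F1 : Set (EuclideanSpace ℝ (Fin n))) +
          (ProperCone.innerDual F2 : Set (EuclideanSpace ℝ (Fin n))) := by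
  have hpart1 : F = F1 ∩ F2 :=
    part1 hK1 hK2 hF hFne hF1 hFF1 hF1min hF2 hFF2 hF2min
  refine ⟨hpart1, ?_⟩
  have hcancel : ∀ y : EuclideanSpace ℝ (Fin n),
      y ∈ ProperCone.innerDual F1 → -y ∈ ProperCone.innerDual F2 →
      (∀ x ∈ F1, ⟪x, y⟫_ℝ = 0) ∧ (∀ x ∈ F2, ⟪x, y⟫_ℝ = 0) := by
    intro y hy1 hy2
    refine cancel_orth hK1 hK2 hF hFne hF1 hFF1 hF1min hF2 hFF2 hF2min
      (fun x hx => ProperCone.mem_innerDual.1 hy1 hx) (fun x hx => ?_)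
    have := ProperCone.mem_innerDual.1 hy2 hx
    rw [inner_neg_right] at this
    linarith
  have hScl : IsClosed ((ProperCone.innerDual F1 : Set (EuclideanSpace ℝ (Fin n))) +
      (ProperCone.innerDual F2 : Set (EuclideanSpace ℝ (Fin n)))) := dual_sum_isClosed hcancel
  -- the sum as a convex cone
  set S : Set (EuclideanSpace ℝ (Fin n)) :=
    (ProperCone.innerDual F1 : Set (EuclideanSpace ℝ (Fin n))) +
      (ProperCone.innerDual F2 : Set (EuclideanSpace ℝ (Fin n))) with hSdef
  have hmemS : ∀ z : EuclideanSpace ℝ (Fin n),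
      z ∈ S ↔ ∃ y1 ∈ ProperCone.innerDual F1, ∃ y2 ∈ ProperCone.innerDual F2, y1 + y2 = z := by
    intro z; rw [hSdef]; exact Set.mem_add
  have hSconv : ∀ (c : ℝ), 0 < c → ∀ z ∈ S, c • z ∈ S := by
    intro c hc z hz
    obtain ⟨y1, hy1, y2, hy2, rfl⟩ := (hmemS z).1 hz
    exact (hmemS _).2 ⟨c • y1, ProperCone.mem_innerDual.2 fun x hx => by
        rw [real_inner_smul_right]; exact mul_nonneg hc.le (ProperCone.mem_innerDual.1 hy1 hx),
      c • y2, ProperCone.mem_innerDual.2 fun x hx => by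
        rw [real_inner_smul_right]; exact mul_nonneg hc.le (ProperCone.mem_innerDual.1 hy2 hx), (smul_add c y1 y2).symm⟩
  have hSadd : ∀ z ∈ S, ∀ w ∈ S, z + w ∈ S := by
    intro z hz w hw
    obtain ⟨y1, hy1, y2, hy2, rfl⟩ := (hmemS z).1 hz
    obtain ⟨w1, hw1, w2, hw2, rfl⟩ := (hmemS w).1 hw
    refine (hmemS _).2 ⟨y1 + w1, (ProperCone.innerDual F1).add_mem hy1 hw1,
      y2 + w2, (ProperCone.innerDual F2).add_mem hy2 hw2, by abel⟩
  set Scone : ConvexCone ℝ (EuclideanSpace ℝ (Fin n)) :=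
    { carrier := S
      smul_mem' := fun _ hc _ hz => hSconv _ hc _ hz
      add_mem' := fun _ hz _ hw => hSadd _ hz _ hw } with hScone
  have hSne : (Scone : Set (EuclideanSpace ℝ (Fin n))).Nonempty := by
    refine ⟨0, (hmemS 0).2 ⟨0, (ProperCone.innerDual F1).zero_mem, 0, (ProperCone.innerDual F2).zero_mem, by simp⟩⟩
  -- inclusion ⊇
  apply Set.Subset.antisymm
  · -- F* ⊆ F1* + F2*
    intro y hy
    by_contra hyS
    have hyS' : y ∉ Scone := hyS
    obtain ⟨z, hz1, hz2⟩ :=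
      Scone.hyperplane_separation_of_nonempty_of_isClosed_of_nmem hSne hScl hyS'
    -- z is in the double dual of F1 and F2, hence in F1 and F2
    have hzF1 : z ∈ F1 := by
      by_contra hzF1
      have hF1ne : F1.Nonempty := hFne.mono hFF1
      have hF1cl : IsClosed F1 := face_isClosed hK1 hF1 hF1ne
      obtain ⟨w, hw1, hw2⟩ :=
        (faceCone hF1 hF1ne).hyperplane_separation_of_nonempty_of_isClosed_of_nmem
          (by exact hF1ne) (by exact hF1cl) (by exact hzF1)
      have hwS : w ∈ Scone := (hmemS w).2 ⟨w, ProperCone.mem_innerDual.2 fun x hx => hw1 x hx, 0,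
        (ProperCone.innerDual F2).zero_mem, by simp⟩
      have := hz1 w hwS
      linarith
    have hzF2 : z ∈ F2 := by
      by_contra hzF2
      have hF2ne : F2.Nonempty := hFne.mono hFF2
      have hF2cl : IsClosed F2 := face_isClosed hK2 hF2 hF2ne
      obtain ⟨w, hw1, hw2⟩ :=
        (faceCone hF2 hF2ne).hyperplane_separation_of_nonempty_of_isClosed_of_nmem
          (by exact hF2ne) (by exact hF2cl) (by exact hzF2)
      have hwS : w ∈ Scone := (hmemS w).2 ⟨0, (ProperCone.innerDual F1).zero_mem, w,
        ProperCone.mem_innerDual.2 fun x hx => hw1 x hx, by simp⟩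
      have := hz1 w hwS
      linarith
    have hzF : z ∈ F := by rw [hpart1]; exact ⟨hzF1, hzF2⟩
    have := ProperCone.mem_innerDual.1 hy hzF
    linarith
  · -- F1* + F2* ⊆ F*
    intro z hz
    obtain ⟨y1, hy1, y2, hy2, rfl⟩ := (hmemS z).1 hz
    rw [SetLike.mem_coe, ProperCone.mem_innerDual]
    intro x hx
    rw [inner_add_right]
    exact add_nonneg (ProperCone.mem_innerDual.1 hy1 (hFF1 hx)) (ProperCone.mem_innerDual.1 hy2 (hFF2 hx))
end

section
/- Let K^1 and K^2 be closed convex cones, and let F^1 ⊆ K^1, F^2 ⊆ K^2 be faces whose relative interiors intersect: ri(F^1) ∩ ri(F^2) ≠ ∅. Then the dual cone of F^1 ∩ F^2 equals (F^1)* + (F^2)*, i.e., the sum of dual cones is closed and no closure operation is needed. -/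
open Pointwise
open scoped InnerProductSpace






lemma riball {n : ℕ} {s : Set (EuclideanSpace ℝ (Fin n))} {x0 : EuclideanSpace ℝ (Fin n)}
    (h : x0 ∈ intrinsicInterior ℝ s) :
    ∃ ε > 0, ∀ d ∈ (affineSpan ℝ s).direction, ‖d‖ < ε → x0 + d ∈ s := by
  obtain ⟨y, hy, rfl⟩ := mem_intrinsicInterior.mp h
  rw [mem_interior_iff_mem_nhds, Metric.mem_nhds_iff] at hy
  obtain ⟨ε, hε, hball⟩ := hy
  refine ⟨ε, hε, fun d hd hdε => ?_⟩
  have hmem : (↑y : EuclideanSpace ℝ (Fin n)) + d ∈ affineSpan ℝ s := by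
    have := AffineSubspace.vadd_mem_of_mem_direction hd y.2
    simpa [vadd_eq_add, add_comm] using this
  have : (⟨↑y + d, hmem⟩ : affineSpan ℝ s) ∈ Metric.ball y ε := by
    rw [Metric.mem_ball, Subtype.dist_eq]
    simpa [dist_eq_norm] using hdε
  exact hball this






lemma face_isClosed_s6 {n : ℕ} {K F : Set (EuclideanSpace ℝ (Fin n))}
    (hK : IsClosedConvexCone K) (hF : IsFace K F)
    {x0 : EuclideanSpace ℝ (Fin n)} (hx0 : x0 ∈ intrinsicInterior ℝ F)
    {ε : ℝ} (hε : 0 < ε)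
    (hball : ∀ d ∈ (affineSpan ℝ F).direction, ‖d‖ < ε → x0 + d ∈ F) : IsClosed F := by
  obtain ⟨hFK, hFconv, hFsmul, hface⟩ := hF
  have hx0F : x0 ∈ F := intrinsicInterior_subset hx0
  apply isClosed_of_closure_subset
  intro x hx
  have hxK : x ∈ K := closure_minimal hFK hK.1 hx
  have hxspan : x ∈ affineSpan ℝ F := by
    have : x ∈ closure (affineSpan ℝ F : Set (EuclideanSpace ℝ (Fin n))) :=
      closure_mono (subset_affineSpan ℝ F) hx
    rwa [IsClosed.closure_eq (affineSpan ℝ F).closed_of_finiteDimensional] at this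
  by_cases hxx : x = x0
  · rwa [hxx]
  have hd : x - x0 ∈ (affineSpan ℝ F).direction := by
    have := AffineSubspace.vsub_mem_direction hxspan (subset_affineSpan ℝ F hx0F)
    simpa [vsub_eq_sub] using this
  have hr : (0:ℝ) < ‖x - x0‖ := by
    rw [norm_pos_iff]; exact sub_ne_zero.mpr hxx
  set r := ‖x - x0‖ with hrdef
  set s := ε / (2 * r) with hsdef
  have hs : 0 < s := div_pos hε (by positivity)
  have hy : x0 + (-s) • (x - x0) ∈ F := by
    apply hball _ (Submodule.smul_mem _ _ hd)
    rw [norm_smul]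
    simp only [norm_neg, Real.norm_eq_abs, abs_of_pos hs]
    rw [hsdef]
    rw [div_mul_eq_mul_div, mul_comm, ← div_mul_eq_mul_div]
    calc r / (2 * r) * ε = (1/2) * ε := by rw [div_mul_eq_div_div_swap]; field_simp
    _ < ε := by linarith
  set y := x0 + (-s) • (x - x0) with hydef
  set l := s / (1 + s) with hldef
  have hl0 : 0 < l := div_pos hs (by linarith)
  have hl1 : l < 1 := by
    rw [hldef, div_lt_one (by linarith)]; linarith
  have key : l • x + (1 - l) • y = x0 := by
    rw [hydef, hldef]
    have h1s : (1:ℝ) + s ≠ 0 := by positivity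
    match_scalars <;> field_simp <;> ring
  have hsum : l • x + (1 - l) • y ∈ F := by rw [key]; exact hx0F
  have h1 : l • x ∈ K := hK.2.2 x hxK l hl0.le
  have h2 : (1 - l) • y ∈ K := hK.2.2 y (hFK hy) _ (by linarith)
  have hlx : l • x ∈ F := (hface _ h1 _ h2 hsum).1
  have := hFsmul _ hlx l⁻¹ (by positivity)
  rwa [smul_smul, inv_mul_cancel₀ hl0.ne', one_smul] at this






lemma dual_bound {n : ℕ} {F : Set (EuclideanSpace ℝ (Fin n))}
    {x0 : EuclideanSpace ℝ (Fin n)} (hx0F : x0 ∈ F) {ε : ℝ} (hε : 0 < ε)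
    (hball : ∀ d ∈ (affineSpan ℝ F).direction, ‖d‖ < ε → x0 + d ∈ F)
    {u : EuclideanSpace ℝ (Fin n)} (hu : ∀ x ∈ F, 0 ≤ ⟪x, u⟫_ℝ) :
    ε / 2 * ‖((Submodule.orthogonalProjection (affineSpan ℝ F).direction u :
      (affineSpan ℝ F).direction) : EuclideanSpace ℝ (Fin n))‖ ≤ ⟪x0, u⟫_ℝ := by
  set V := (affineSpan ℝ F).direction
  set p := ((Submodule.orthogonalProjection V u : V) : EuclideanSpace ℝ (Fin n)) with hpdef
  by_cases hp : p = 0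
  · rw [hp]; simpa using hu x0 hx0F
  have hpn : (0:ℝ) < ‖p‖ := norm_pos_iff.mpr hp
  set c := ε / (2 * ‖p‖) with hcdef
  have hc : 0 < c := div_pos hε (by positivity)
  have hdmem : (-c) • p ∈ V := Submodule.smul_mem _ _ (by exact (Submodule.orthogonalProjection V u).2)
  have hdnorm : ‖(-c) • p‖ < ε := by
    rw [norm_smul, norm_neg, Real.norm_eq_abs, abs_of_pos hc, hcdef]
    rw [div_mul_eq_mul_div, mul_comm, div_lt_iff₀ (by positivity : (0:ℝ) < 2 * ‖p‖)]
    nlinarith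
  have hF' := hu _ (hball _ hdmem hdnorm)
  have hpu : ⟪p, u⟫_ℝ = ‖p‖ ^ 2 := by
    have horth : u - p ∈ Vᗮ := by exact Submodule.sub_starProjection_mem_orthogonal (K := V) u
    have h0 : ⟪p, u - p⟫_ℝ = 0 :=
      Submodule.inner_right_of_mem_orthogonal (Submodule.orthogonalProjection V u).2 horth
    have := inner_sub_right (𝕜 := ℝ) p u p
    rw [h0] at this
    have h2 : ⟪p, u⟫_ℝ = ⟪p, p⟫_ℝ := by linarith [this]
    rw [h2, real_inner_self_eq_norm_sq]
  rw [inner_add_left, inner_smul_left] at hF'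
  simp only [RCLike.star_def, conj_trivial] at hF'
  rw [hpu] at hF'
  have : c * ‖p‖^2 = ε / 2 * ‖p‖ := by
    rw [hcdef]; field_simp
  nlinarith

set_option maxHeartbeats 1000000 in
set_option synthInstance.maxHeartbeats 400000 in
lemma dual_sum_closed {n : ℕ} {F1 F2 : Set (EuclideanSpace ℝ (Fin n))}
    {x0 : EuclideanSpace ℝ (Fin n)} (hx01 : x0 ∈ F1) (hx02 : x0 ∈ F2)
    {ε1 ε2 : ℝ} (hε1 : 0 < ε1) (hε2 : 0 < ε2)
    (hball1 : ∀ d ∈ (affineSpan ℝ F1).direction, ‖d‖ < ε1 → x0 + d ∈ F1)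
    (hball2 : ∀ d ∈ (affineSpan ℝ F2).direction, ‖d‖ < ε2 → x0 + d ∈ F2)
    (hFV1 : F1 ⊆ ((affineSpan ℝ F1).direction : Set (EuclideanSpace ℝ (Fin n))))
    (hFV2 : F2 ⊆ ((affineSpan ℝ F2).direction : Set (EuclideanSpace ℝ (Fin n)))) :
    IsClosed ((ProperCone.innerDual F1 : Set (EuclideanSpace ℝ (Fin n))) +
      (ProperCone.innerDual F2 : Set (EuclideanSpace ℝ (Fin n)))) := by
  classical
  set V1 := (affineSpan ℝ F1).direction with hV1
  set V2 := (affineSpan ℝ F2).direction with hV2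
  set P1 : EuclideanSpace ℝ (Fin n) → EuclideanSpace ℝ (Fin n) :=
    fun y => ((Submodule.orthogonalProjection V1 y : V1) : EuclideanSpace ℝ (Fin n)) with hP1
  set P2 : EuclideanSpace ℝ (Fin n) → EuclideanSpace ℝ (Fin n) :=
    fun y => ((Submodule.orthogonalProjection V2 y : V2) : EuclideanSpace ℝ (Fin n)) with hP2
  apply isClosed_of_closure_subset
  intro z hz
  obtain ⟨w, hwS, hwz⟩ := mem_closure_iff_seq_limit.mp hz
  have hdecomp : ∀ k, ∃ a ∈ (ProperCone.innerDual F1 : Set (EuclideanSpace ℝ (Fin n))),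
      ∃ b ∈ (ProperCone.innerDual F2 : Set (EuclideanSpace ℝ (Fin n))), a + b = w k :=
    fun k => Set.mem_add.mp (hwS k)
  choose u hu v hv huv using hdecomp
  have hdu : ∀ k, ∀ x ∈ F1, 0 ≤ ⟪x, u k⟫_ℝ := fun k => ProperCone.mem_innerDual.mp (hu k)
  have hdv : ∀ k, ∀ x ∈ F2, 0 ≤ ⟪x, v k⟫_ℝ := fun k => ProperCone.mem_innerDual.mp (hv k)
  -- bound on the norms of `w k`
  obtain ⟨M, hM⟩ : ∃ M : ℝ, ∀ k, ‖w k‖ ≤ M := by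
    obtain ⟨M, hM⟩ := hwz.norm.bddAbove_range
    exact ⟨M, fun k => hM (Set.mem_range_self k)⟩
  have hM0 : 0 ≤ M := le_trans (norm_nonneg _) (hM 0)
  set C0 := ‖x0‖ * M with hC0
  have hC00 : 0 ≤ C0 := mul_nonneg (norm_nonneg _) hM0
  have hsum_le : ∀ k, ⟪x0, u k⟫_ℝ + ⟪x0, v k⟫_ℝ ≤ C0 := by
    intro k
    have h1 : ⟪x0, u k⟫_ℝ + ⟪x0, v k⟫_ℝ = ⟪x0, w k⟫_ℝ := by
      rw [← huv k, inner_add_right]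
    rw [h1]
    calc ⟪x0, w k⟫_ℝ ≤ ‖x0‖ * ‖w k‖ := real_inner_le_norm _ _
      _ ≤ C0 := mul_le_mul_of_nonneg_left (hM k) (norm_nonneg _)
  have hu_le : ∀ k, ⟪x0, u k⟫_ℝ ≤ C0 := fun k => by
    have := hdv k x0 hx02; linarith [hsum_le k]
  have hv_le : ∀ k, ⟪x0, v k⟫_ℝ ≤ C0 := fun k => by
    have := hdu k x0 hx01; linarith [hsum_le k]
  set B1 := 2 * C0 / ε1 with hB1
  set B2 := 2 * C0 / ε2 with hB2
  have hPu : ∀ k, ‖P1 (u k)‖ ≤ B1 := by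
    intro k
    have h := dual_bound hx01 hε1 hball1 (hdu k)
    rw [hB1, le_div_iff₀ hε1]
    nlinarith [hu_le k]
  have hPv : ∀ k, ‖P2 (v k)‖ ≤ B2 := by
    intro k
    have h := dual_bound hx02 hε2 hball2 (hdv k)
    rw [hB2, le_div_iff₀ hε2]
    nlinarith [hv_le k]
  set s : ℕ → EuclideanSpace ℝ (Fin n) := fun k => w k - P1 (u k) - P2 (v k) with hs
  have hskmem : ∀ k, s k ∈ V1ᗮ ⊔ V2ᗮ := by
    intro k
    have h1 : u k - P1 (u k) ∈ V1ᗮ := by exact Submodule.sub_starProjection_mem_orthogonal (K := V1) (u k)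
    have h2 : v k - P2 (v k) ∈ V2ᗮ := by exact Submodule.sub_starProjection_mem_orthogonal (K := V2) (v k)
    have heq : s k = (u k - P1 (u k)) + (v k - P2 (v k)) := by
      rw [hs]; simp only; rw [← huv k]; abel
    rw [heq]
    exact Submodule.add_mem_sup h1 h2
  have hsknorm : ∀ k, ‖s k‖ ≤ M + B1 + B2 := by
    intro k
    calc ‖s k‖ ≤ ‖w k - P1 (u k)‖ + ‖P2 (v k)‖ := norm_sub_le _ _
      _ ≤ ‖w k‖ + ‖P1 (u k)‖ + ‖P2 (v k)‖ := by linarith [norm_sub_le (w k) (P1 (u k))]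
      _ ≤ M + B1 + B2 := by linarith [hM k, hPu k, hPv k]
  -- a linear bounded section of the addition map V1ᗮ × V2ᗮ → V1ᗮ ⊔ V2ᗮ
  set W := V1ᗮ ⊔ V2ᗮ with hW
  let φ : (V1ᗮ × V2ᗮ) →ₗ[ℝ] W :=
    { toFun := fun p => ⟨(p.1 : EuclideanSpace ℝ (Fin n)) + (p.2 : EuclideanSpace ℝ (Fin n)),
        Submodule.add_mem_sup p.1.2 p.2.2⟩
      map_add' := fun p q => by
        apply Subtype.ext
        simp only [Prod.fst_add, Prod.snd_add, Submodule.coe_add]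
        abel
      map_smul' := fun c p => by
        apply Subtype.ext
        simp only [Prod.smul_fst, Prod.smul_snd, Submodule.coe_smul, RingHom.id_apply,
          SetLike.val_smul, smul_add] }
  have hφsurj : Function.Surjective φ := by
    rintro ⟨x, hx⟩
    rw [Submodule.mem_sup] at hx
    obtain ⟨a, ha, b, hb, hab⟩ := hx
    exact ⟨(⟨a, ha⟩, ⟨b, hb⟩), Subtype.ext hab⟩
  obtain ⟨σ, hσ⟩ := φ.exists_rightInverse_of_surjective (LinearMap.range_eq_top.mpr hφsurj)
  have hσapp : ∀ x : W, φ (σ x) = x := fun x => congrFun (congrArg DFunLike.coe hσ) x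
  set σc := LinearMap.toContinuousLinearMap σ with hσc
  set C := ‖σc‖ with hC
  have hC0' : 0 ≤ C := hC ▸ norm_nonneg σc
  set q : ℕ → EuclideanSpace ℝ (Fin n) := fun k => ((σ ⟨s k, hskmem k⟩).1 : EuclideanSpace ℝ (Fin n)) with hq
  set r : ℕ → EuclideanSpace ℝ (Fin n) := fun k => ((σ ⟨s k, hskmem k⟩).2 : EuclideanSpace ℝ (Fin n)) with hr
  have hqV : ∀ k, q k ∈ V1ᗮ := fun k => (σ ⟨s k, hskmem k⟩).1.2
  have hrV : ∀ k, r k ∈ V2ᗮ := fun k => (σ ⟨s k, hskmem k⟩).2.2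
  have hqr : ∀ k, q k + r k = s k := by
    intro k
    have := congrArg (Subtype.val) (hσapp ⟨s k, hskmem k⟩)
    exact this
  have hqnorm : ∀ k, ‖q k‖ ≤ C * (M + B1 + B2) := by
    intro k
    have h0 : ‖q k‖ = ‖(σ ⟨s k, hskmem k⟩).1‖ := rfl
    have h1 : ‖q k‖ ≤ ‖σ ⟨s k, hskmem k⟩‖ := by rw [h0]; exact norm_fst_le _
    have h2 : ‖σc ⟨s k, hskmem k⟩‖ ≤ C * ‖(⟨s k, hskmem k⟩ : W)‖ := σc.le_opNorm _
    have h3 : ‖(⟨s k, hskmem k⟩ : W)‖ = ‖s k‖ := rfl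
    have h4 : (σc ⟨s k, hskmem k⟩) = σ ⟨s k, hskmem k⟩ := rfl
    rw [h4, h3] at h2
    calc ‖q k‖ ≤ C * ‖s k‖ := le_trans h1 h2
      _ ≤ C * (M + B1 + B2) := mul_le_mul_of_nonneg_left (hsknorm k) hC0'
  -- the adjusted sequences
  set u' : ℕ → EuclideanSpace ℝ (Fin n) := fun k => P1 (u k) + q k with hu'def
  set v' : ℕ → EuclideanSpace ℝ (Fin n) := fun k => w k - u' k with hv'def
  have hkey1 : ∀ k, ∀ x ∈ F1, ⟪x, u' k⟫_ℝ = ⟪x, u k⟫_ℝ := by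
    intro k x hx
    have hxV : x ∈ V1 := hFV1 hx
    have h1 : ⟪x, q k⟫_ℝ = 0 := Submodule.inner_right_of_mem_orthogonal hxV (hqV k)
    have h2 : ⟪x, u k - P1 (u k)⟫_ℝ = 0 := Submodule.inner_right_of_mem_orthogonal hxV
      (by exact Submodule.sub_starProjection_mem_orthogonal (K := V1) (u k))
    rw [inner_sub_right] at h2
    rw [hu'def]; simp only
    rw [inner_add_right, h1]
    linarith
  have hu' : ∀ k, u' k ∈ (ProperCone.innerDual F1 : Set (EuclideanSpace ℝ (Fin n))) := by
    intro k
    rw [SetLike.mem_coe, ProperCone.mem_innerDual]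
    intro x hx
    rw [hkey1 k x hx]
    exact hdu k x hx
  have hv'eq : ∀ k, v' k = P2 (v k) + r k := by
    intro k
    have hwk : w k = (P1 (u k) + q k) + (P2 (v k) + r k) := by
      have h := hqr k
      rw [hs] at h; simp only at h
      rw [show w k - P1 (u k) - P2 (v k) = w k - P1 (u k) - P2 (v k) from rfl] at h
      have : w k = P1 (u k) + P2 (v k) + (q k + r k) := by rw [h]; abel
      rw [this]; abel
    rw [hv'def]; simp only [hu'def]
    rw [hwk]; abel
  have hv' : ∀ k, v' k ∈ (ProperCone.innerDual F2 : Set (EuclideanSpace ℝ (Fin n))) := by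
    intro k
    rw [SetLike.mem_coe, ProperCone.mem_innerDual]
    intro x hx
    have hxV : x ∈ V2 := hFV2 hx
    have h1 : ⟪x, r k⟫_ℝ = 0 := Submodule.inner_right_of_mem_orthogonal hxV (hrV k)
    have h2 : ⟪x, v k - P2 (v k)⟫_ℝ = 0 := Submodule.inner_right_of_mem_orthogonal hxV
      (by exact Submodule.sub_starProjection_mem_orthogonal (K := V2) (v k))
    rw [inner_sub_right] at h2
    rw [hv'eq k, inner_add_right, h1]
    have := hdv k x hx
    linarith
  -- extract a convergent subsequence
  set R := B1 + C * (M + B1 + B2) with hR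
  have hu'bdd : ∀ k, u' k ∈ Metric.closedBall (0 : EuclideanSpace ℝ (Fin n)) R := by
    intro k
    rw [Metric.mem_closedBall, dist_zero_right]
    calc ‖u' k‖ ≤ ‖P1 (u k)‖ + ‖q k‖ := norm_add_le _ _
      _ ≤ R := by rw [hR]; linarith [hPu k, hqnorm k]
  obtain ⟨a, -, ψ, hψ, hconv⟩ := tendsto_subseq_of_bounded Metric.isBounded_closedBall hu'bdd
  have ha1 : a ∈ (ProperCone.innerDual F1 : Set (EuclideanSpace ℝ (Fin n))) :=
    (ProperCone.innerDual F1).isClosed.mem_of_tendsto hconv (Filter.Eventually.of_forall fun k => hu' (ψ k))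
  have hwψ : Filter.Tendsto (w ∘ ψ) Filter.atTop (nhds z) := hwz.comp hψ.tendsto_atTop
  have hvconv : Filter.Tendsto (v' ∘ ψ) Filter.atTop (nhds (z - a)) := by
    have : v' ∘ ψ = (w ∘ ψ) - (u' ∘ ψ) := by
      funext k; simp [hv'def]
    rw [this]
    exact hwψ.sub hconv
  have ha2 : z - a ∈ (ProperCone.innerDual F2 : Set (EuclideanSpace ℝ (Fin n))) :=
    (ProperCone.innerDual F2).isClosed.mem_of_tendsto hvconv (Filter.Eventually.of_forall fun k => hv' (ψ k))
  exact Set.mem_add.mpr ⟨a, ha1, z - a, ha2, by abel⟩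

noncomputable def setCone {n : ℕ} (F : Set (EuclideanSpace ℝ (Fin n))) (hconv : Convex ℝ F)
    (hsmul : ∀ x ∈ F, ∀ t : ℝ, 0 ≤ t → t • x ∈ F) :
    ConvexCone ℝ (EuclideanSpace ℝ (Fin n)) where
  carrier := F
  smul_mem' := fun c hc {x} hx => hsmul x hx c hc.le
  add_mem' := fun {x} hx {y} hy => by
    have h := hconv hx hy (by norm_num : (0:ℝ) ≤ 1/2) (by norm_num : (0:ℝ) ≤ 1/2)
      (by norm_num)
    have h2 := hsmul _ h 2 (by norm_num)
    rw [smul_add, smul_smul, smul_smul] at h2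
    norm_num at h2
    exact h2

noncomputable def setPCone {n : ℕ} (F : Set (EuclideanSpace ℝ (Fin n))) (hconv : Convex ℝ F)
    (hsmul : ∀ x ∈ F, ∀ t : ℝ, 0 ≤ t → t • x ∈ F) (h0 : (0 : EuclideanSpace ℝ (Fin n)) ∈ F)
    (hcl : IsClosed F) : ProperCone ℝ (EuclideanSpace ℝ (Fin n)) where
  carrier := F
  add_mem' := fun hx hy => (setCone F hconv hsmul).add_mem' hx hy
  zero_mem' := h0
  smul_mem' := fun c {x} hx => by simpa [NNReal.smul_def] using hsmul x hx c c.2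
  isClosed' := hcl

lemma coe_setPCone {n : ℕ} (F : Set (EuclideanSpace ℝ (Fin n))) (hconv : Convex ℝ F)
    (hsmul : ∀ x ∈ F, ∀ t : ℝ, 0 ≤ t → t • x ∈ F) (h0 : (0 : EuclideanSpace ℝ (Fin n)) ∈ F)
    (hcl : IsClosed F) : (setPCone F hconv hsmul h0 hcl : Set (EuclideanSpace ℝ (Fin n))) = F := rfl

set_option maxHeartbeats 1000000 in
/-- If the relative interiors of the faces `F¹ ⊆ K¹`, `F² ⊆ K²` intersect, then
`(F¹ ∩ F²)* = (F¹)* + (F²)*` (the sum of dual cones is closed). -/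
theorem stmt6 {n : ℕ} (K1 K2 F1 F2 : Set (EuclideanSpace ℝ (Fin n)))
    (hK1 : IsClosedConvexCone K1) (hK2 : IsClosedConvexCone K2)
    (hF1 : IsFace K1 F1) (hF2 : IsFace K2 F2)
    (hri : (intrinsicInterior ℝ F1 ∩ intrinsicInterior ℝ F2).Nonempty) :
    (ProperCone.innerDual (F1 ∩ F2) : Set (EuclideanSpace ℝ (Fin n))) =
      (ProperCone.innerDual F1 : Set (EuclideanSpace ℝ (Fin n))) +
        (ProperCone.innerDual F2 : Set (EuclideanSpace ℝ (Fin n))) := by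
  obtain ⟨x0, hx01i, hx02i⟩ := hri
  have hx01 : x0 ∈ F1 := intrinsicInterior_subset hx01i
  have hx02 : x0 ∈ F2 := intrinsicInterior_subset hx02i
  obtain ⟨ε1, hε1, hball1⟩ := riball hx01i
  obtain ⟨ε2, hε2, hball2⟩ := riball hx02i
  have h0F1 : (0 : EuclideanSpace ℝ (Fin n)) ∈ F1 := by
    have := hF1.2.2.1 x0 hx01 0 le_rfl; simpa using this
  have h0F2 : (0 : EuclideanSpace ℝ (Fin n)) ∈ F2 := by
    have := hF2.2.2.1 x0 hx02 0 le_rfl; simpa using this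
  have hFV1 : F1 ⊆ ((affineSpan ℝ F1).direction : Set (EuclideanSpace ℝ (Fin n))) := by
    intro f hf
    have := AffineSubspace.vsub_mem_direction (subset_affineSpan ℝ F1 hf)
      (subset_affineSpan ℝ F1 h0F1)
    simpa [vsub_eq_sub] using this
  have hFV2 : F2 ⊆ ((affineSpan ℝ F2).direction : Set (EuclideanSpace ℝ (Fin n))) := by
    intro f hf
    have := AffineSubspace.vsub_mem_direction (subset_affineSpan ℝ F2 hf)
      (subset_affineSpan ℝ F2 h0F2)
    simpa [vsub_eq_sub] using this
  have hF1closed := face_isClosed_s6 hK1 hF1 hx01i hε1 hball1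
  have hF2closed := face_isClosed_s6 hK2 hF2 hx02i hε2 hball2
  have hSclosed := dual_sum_closed hx01 hx02 hε1 hε2 hball1 hball2 hFV1 hFV2
  have hp1 : (0 : EuclideanSpace ℝ (Fin n)) ∈ ProperCone.innerDual F1 := (ProperCone.innerDual F1).zero_mem
  have hp2 : (0 : EuclideanSpace ℝ (Fin n)) ∈ ProperCone.innerDual F2 := (ProperCone.innerDual F2).zero_mem
  apply Set.Subset.antisymm
  · intro wv hw
    by_contra hnot
    set Cc : ProperCone ℝ (EuclideanSpace ℝ (Fin n)) :=
      { toSubmodule := (ProperCone.innerDual F1).toSubmodule ⊔ (ProperCone.innerDual F2).toSubmodule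
        isClosed' := (congrArg IsClosed (Submodule.coe_sup (ProperCone.innerDual F1).toSubmodule
          (ProperCone.innerDual F2).toSubmodule)).mpr hSclosed } with hCcdef
    have hCcset : (Cc : Set (EuclideanSpace ℝ (Fin n))) =
        (ProperCone.innerDual F1 : Set (EuclideanSpace ℝ (Fin n))) +
        (ProperCone.innerDual F2 : Set (EuclideanSpace ℝ (Fin n))) := by
      exact Submodule.coe_sup _ _
    have hwnot : wv ∉ Cc := by
      intro hmem
      exact hnot (hCcset ▸ (SetLike.mem_coe.mpr hmem))
    obtain ⟨y, hy1, hy2⟩ := ProperCone.hyperplane_separation' Cc hwnot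
    have hyF1 : y ∈ F1 := by
      have hdd := ProperCone.innerDual_innerDual
        (setPCone F1 hF1.2.1 hF1.2.2.1 h0F1 hF1closed)
      have hymem : y ∈ ProperCone.innerDual (ProperCone.innerDual
          (setPCone F1 hF1.2.1 hF1.2.2.1 h0F1 hF1closed : Set (EuclideanSpace ℝ (Fin n))) :
          Set (EuclideanSpace ℝ (Fin n))) := by
        rw [ProperCone.mem_innerDual]
        intro t ht
        rw [coe_setPCone] at ht
        refine hy1 t ?_
        exact Submodule.mem_sup.mpr ⟨t, ht, 0, hp2, add_zero t⟩
      rw [hdd, ← SetLike.mem_coe, coe_setPCone] at hymem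
      exact hymem
    have hyF2 : y ∈ F2 := by
      have hdd := ProperCone.innerDual_innerDual
        (setPCone F2 hF2.2.1 hF2.2.2.1 h0F2 hF2closed)
      have hymem : y ∈ ProperCone.innerDual (ProperCone.innerDual
          (setPCone F2 hF2.2.1 hF2.2.2.1 h0F2 hF2closed : Set (EuclideanSpace ℝ (Fin n))) :
          Set (EuclideanSpace ℝ (Fin n))) := by
        rw [ProperCone.mem_innerDual]
        intro t ht
        rw [coe_setPCone] at ht
        refine hy1 t ?_
        exact Submodule.mem_sup.mpr ⟨0, hp1, t, ht, zero_add t⟩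
      rw [hdd, ← SetLike.mem_coe, coe_setPCone] at hymem
      exact hymem
    have : 0 ≤ ⟪y, wv⟫_ℝ :=
      ProperCone.mem_innerDual.mp (SetLike.mem_coe.mp hw) ⟨hyF1, hyF2⟩
    linarith [real_inner_comm y wv]
  · intro x hx
    obtain ⟨a, ha, b, hb, hab⟩ := Set.mem_add.mp hx
    subst hab
    rw [SetLike.mem_coe, ProperCone.mem_innerDual]
    intro t ht
    rw [inner_add_right]
    have h1 := ProperCone.mem_innerDual.mp (SetLike.mem_coe.mp ha) ht.1
    have h2 := ProperCone.mem_innerDual.mp (SetLike.mem_coe.mp hb) ht.2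
    linarith
end

section
/- Let K be a closed convex cone with lineality space U = K ∩ (−K), and set K̂ = K ∩ U^⊥. Then the map F ↦ F + U is a bijection between the set of faces of K̂ and the set of faces of K, and this bijection preserves polyhedrality: F is polyhedral if and only if F + U is polyhedral. -/
open Pointwise

/-- A polyhedral cone: a finite intersection of closed half-spaces. -/
def IsPolyhedralCone {m : ℕ} (K : Set (EuclideanSpace ℝ (Fin m))) : Prop :=
  ∃ s : Finset (EuclideanSpace ℝ (Fin m)), K = {x | ∀ v ∈ s, 0 ≤ (inner ℝ v x : ℝ)}

/-- With `U = K ∩ (−K)` the lineality space and `K̂ = K ∩ U^⊥`, the map `F ↦ F + U`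
is a bijection between faces of `K̂` and faces of `K` preserving polyhedrality. -/
theorem stmt9 {n : ℕ} (K U Khat : Set (EuclideanSpace ℝ (Fin n)))
    (hK : IsClosedConvexCone K)
    (hU : U = K ∩ (-K))
    (hKhat : Khat = K ∩ {x | ∀ u ∈ U, (inner ℝ x u : ℝ) = 0}) :
    Set.BijOn (fun F => F + U) {F | IsFace Khat F} {G | IsFace K G} ∧
      ∀ F, IsFace Khat F → (IsPolyhedralCone F ↔ IsPolyhedralCone (F + U)) := by
  classical
  obtain ⟨hKcl, hKconv, hKcone⟩ := hK
  by_cases h0 : (0 : EuclideanSpace ℝ (Fin n)) ∈ K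
  case neg =>
    -- K is empty
    have hKe : K = ∅ := by
      ext x
      simp only [Set.mem_empty_iff_false, iff_false]
      intro hx
      exact h0 (by simpa using hKcone x hx 0 le_rfl)
    have hUe : U = ∅ := by rw [hU, hKe]; simp
    have hKhate : Khat = ∅ := by rw [hKhat, hKe]; simp
    have hface : ∀ F : Set (EuclideanSpace ℝ (Fin n)), IsFace (∅ : Set (EuclideanSpace ℝ (Fin n))) F ↔ F = ∅ := by
      intro F
      constructor
      · intro h; exact Set.subset_empty_iff.mp h.1
      · rintro rfl
        exact ⟨subset_rfl, convex_empty, by simp, by simp⟩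
    have hfe : IsFace (∅ : Set (EuclideanSpace ℝ (Fin n))) (∅ : Set (EuclideanSpace ℝ (Fin n))) := (hface ∅).mpr rfl
    have haddU : ∀ F : Set (EuclideanSpace ℝ (Fin n)), F + U = ∅ := by
      intro F; rw [hUe, Set.add_empty]
    constructor
    · refine ⟨?_, ?_, ?_⟩
      · intro F hF
        simp only [Set.mem_setOf_eq, hKe] at *
        rw [haddU F]; exact hfe
      · intro F1 h1 F2 h2 _
        simp only [Set.mem_setOf_eq, hKhate, hface] at h1 h2
        rw [h1, h2]
      · intro G hG
        simp only [Set.mem_setOf_eq, hKe, hface] at hG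
        refine ⟨∅, by simp only [Set.mem_setOf_eq, hKhate]; exact hfe, ?_⟩
        show ∅ + U = G
        rw [haddU ∅, hG]
    · intro F hF
      simp only [Set.mem_setOf_eq, hKhate, hface] at hF
      rw [haddU F, hF]
  case pos =>
  -- main case: 0 ∈ K
  have hKadd : ∀ x ∈ K, ∀ y ∈ K, x + y ∈ K := by
    intro x hx y hy
    have hmid := hKconv hx hy (by norm_num : (0:ℝ) ≤ 1/2) (by norm_num : (0:ℝ) ≤ 1/2) (by norm_num)
    have h2 := hKcone _ hmid 2 (by norm_num)
    have : (2:ℝ) • ((1/2 : ℝ) • x + (1/2 : ℝ) • y) = x + y := by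
      rw [smul_add, smul_smul, smul_smul]; norm_num
    rwa [this] at h2
  have hUK : U ⊆ K := by rw [hU]; exact Set.inter_subset_left
  have hUmem : ∀ u, u ∈ U ↔ u ∈ K ∧ -u ∈ K := by
    intro u; rw [hU]; simp [Set.mem_inter_iff, Set.mem_neg]
  have h0U : (0 : EuclideanSpace ℝ (Fin n)) ∈ U := (hUmem 0).mpr ⟨h0, by simpa using h0⟩
  have hUadd : ∀ u ∈ U, ∀ v ∈ U, u + v ∈ U := by
    intro u hu v hv
    rw [hUmem] at hu hv ⊢
    exact ⟨hKadd u hu.1 v hv.1, by rw [neg_add]; exact hKadd _ hu.2 _ hv.2⟩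
  have hUsmul : ∀ (t : ℝ), ∀ u ∈ U, t • u ∈ U := by
    intro t u hu
    rw [hUmem] at hu ⊢
    rcases le_total 0 t with ht | ht
    · exact ⟨hKcone u hu.1 t ht, by rw [← smul_neg]; exact hKcone _ hu.2 t ht⟩
    · constructor
      · have := hKcone _ hu.2 (-t) (by linarith)
        rwa [smul_neg, neg_smul, neg_neg] at this
      · have := hKcone _ hu.1 (-t) (by linarith)
        rwa [neg_smul] at this
  let Usub : Submodule ℝ (EuclideanSpace ℝ (Fin n)) :=
    { carrier := U
      add_mem' := fun ha hb => hUadd _ ha _ hb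
      zero_mem' := h0U
      smul_mem' := fun t u hu => hUsmul t u hu }
  have hUsub : ∀ u : EuclideanSpace ℝ (Fin n), u ∈ Usub ↔ u ∈ U := fun u => Iff.rfl
  -- the orthogonal complement as a set
  have hWset : {x : EuclideanSpace ℝ (Fin n) | ∀ u ∈ U, (inner ℝ x u : ℝ) = 0} = (Usubᗮ : Set (EuclideanSpace ℝ (Fin n))) := by
    ext x
    simp only [Set.mem_setOf_eq, SetLike.mem_coe, Submodule.mem_orthogonal]
    constructor
    · intro h u hu; rw [real_inner_comm]; exact h u hu
    · intro h u hu; rw [real_inner_comm]; exact h u hu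
  have hKhat' : Khat = K ∩ (Usubᗮ : Set (EuclideanSpace ℝ (Fin n))) := by rw [hKhat, hWset]
  -- orthogonal decomposition
  have hdec : ∀ x : EuclideanSpace ℝ (Fin n), ∃ u ∈ U, ∃ w ∈ Usubᗮ, x = u + w := by
    intro x
    obtain ⟨y, hy, z, hz, hxyz⟩ := Usub.exists_add_mem_mem_orthogonal x
    exact ⟨y, hy, z, hz, hxyz⟩
  choose pu hpu pw hpw hsum using hdec
  have huniq : ∀ x : EuclideanSpace ℝ (Fin n), x ∈ U → x ∈ Usubᗮ → x = 0 := by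
    intro x hx hw
    have := (Submodule.mem_orthogonal Usub x).mp hw x hx
    exact inner_self_eq_zero.mp this
  have horthUW : ∀ u ∈ U, ∀ w : EuclideanSpace ℝ (Fin n), w ∈ Usubᗮ → (inner ℝ u w : ℝ) = 0 := by
    intro u hu w hw
    exact (Submodule.mem_orthogonal Usub w).mp hw u hu
  -- uniqueness of decomposition
  have hpw_eq : ∀ (x f u : EuclideanSpace ℝ (Fin n)), f ∈ Usubᗮ → u ∈ U → x = f + u → pw x = f := by
    intro x f u hf hu hx
    have hd : pw x - f = u - pu x := by
      have h1 : f + u = pu x + pw x := hx.symm.trans (hsum x)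
      calc pw x - f = pu x + pw x - f - pu x := by abel
        _ = f + u - f - pu x := by rw [← h1]
        _ = u - pu x := by abel
    have hmemU : pw x - f ∈ U := by
      rw [hd]
      rw [show u - pu x = u + (-1 : ℝ) • pu x by rw [neg_one_smul, sub_eq_add_neg]]
      exact hUadd _ hu _ (hUsmul _ _ (hpu x))
    have hmemW : pw x - f ∈ Usubᗮ := Submodule.sub_mem _ (hpw x) hf
    have := huniq _ hmemU hmemW
    have : pw x = f := by
      have h := sub_eq_zero.mp this
      exact h
    exact this
  -- decomposition of elements of K
  have hdecK : ∀ x ∈ K, ∃ f ∈ Khat, ∃ u ∈ U, x = f + u := by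
    intro x hx
    refine ⟨pw x, ?_, pu x, hpu x, (hsum x).trans (add_comm _ _)⟩
    rw [hKhat']
    constructor
    · have hneg : -pu x ∈ U := by
        have : -pu x = (-1 : ℝ) • pu x := by simp
        rw [this]; exact hUsmul _ _ (hpu x)
      have : pw x = x + (-pu x) := by
        rw [← sub_eq_add_neg]
        exact eq_sub_of_add_eq' (hsum x).symm
      rw [this]
      exact hKadd x hx _ (hUK hneg)
    · exact hpw x
  have hKhatW : Khat ⊆ (Usubᗮ : Set (EuclideanSpace ℝ (Fin n))) := by rw [hKhat']; exact Set.inter_subset_right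
  have hKhatK : Khat ⊆ K := by rw [hKhat']; exact Set.inter_subset_left
  have hUconv : Convex ℝ U := Usub.convex
  -- MapsTo: F face of Khat implies F + U face of K
  have hMapsTo : ∀ F : Set (EuclideanSpace ℝ (Fin n)), IsFace Khat F → IsFace K (F + U) := by
    intro F ⟨hFsub, hFconv, hFcone, hFface⟩
    refine ⟨?_, hFconv.add hUconv, ?_, ?_⟩
    · rintro x hx
      obtain ⟨f, hf, u, hu, rfl⟩ := Set.mem_add.mp hx
      exact hKadd f (hKhatK (hFsub hf)) u (hUK hu)
    · rintro x hx t ht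
      obtain ⟨f, hf, u, hu, rfl⟩ := Set.mem_add.mp hx
      rw [smul_add]
      exact Set.add_mem_add (hFcone f hf t ht) (hUsmul t u hu)
    · intro x hx y hy hxy
      obtain ⟨fx, hfx, ux, hux, hxd⟩ := hdecK x hx
      obtain ⟨fy, hfy, uy, huy, hyd⟩ := hdecK y hy
      obtain ⟨g, hg, w, hw, hgw⟩ := Set.mem_add.mp hxy
      -- fx + fy - g is in both U and Usubᗮ
      have hkey : fx + fy - g = w - (ux + uy) := by
        have h1 : fx + ux + (fy + uy) = g + w := by rw [← hxd, ← hyd]; exact hgw.symm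
        calc fx + fy - g = fx + ux + (fy + uy) - g - (ux + uy) := by abel
          _ = g + w - g - (ux + uy) := by rw [h1]
          _ = w - (ux + uy) := by abel
      have hmemU : fx + fy - g ∈ U := by
        rw [hkey]
        rw [show w - (ux + uy) = w + (-1 : ℝ) • (ux + uy) by rw [neg_one_smul, sub_eq_add_neg]]
        exact hUadd _ hw _ (hUsmul _ _ (hUadd _ hux _ huy))
      have hmemW : fx + fy - g ∈ Usubᗮ := by
        have hfx' : fx ∈ Usubᗮ := hKhatW hfx
        have hfy' : fy ∈ Usubᗮ := hKhatW hfy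
        have hg' : g ∈ Usubᗮ := hKhatW (hFsub hg)
        exact Submodule.sub_mem _ (Submodule.add_mem _ hfx' hfy') hg'
      have hz := huniq _ hmemU hmemW
      have hsum' : fx + fy = g := by
        have := sub_eq_zero.mp hz
        exact this
      have hmem : fx + fy ∈ F := hsum' ▸ hg
      obtain ⟨hfxF, hfyF⟩ := hFface fx hfx fy hfy hmem
      constructor
      · rw [hxd]; exact Set.add_mem_add hfxF hux
      · rw [hyd]; exact Set.add_mem_add hfyF huy
  -- recovering F from F + U
  have hcap : ∀ F : Set (EuclideanSpace ℝ (Fin n)), IsFace Khat F → (F + U) ∩ (Usubᗮ : Set (EuclideanSpace ℝ (Fin n))) = F := by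
    intro F ⟨hFsub, _, _, _⟩
    ext x
    constructor
    · rintro ⟨hx, hxW⟩
      obtain ⟨f, hf, u, hu, rfl⟩ := Set.mem_add.mp hx
      have hfW : f ∈ Usubᗮ := hKhatW (hFsub hf)
      have huW : u ∈ Usubᗮ := by
        have : u = f + u - f := by abel
        rw [this]
        exact Submodule.sub_mem _ hxW hfW
      have : u = 0 := huniq u hu huW
      rw [this, add_zero]
      exact hf
    · intro hx
      exact ⟨by rw [show x = x + 0 by abel]; exact Set.add_mem_add hx h0U, hKhatW (hFsub hx)⟩
  -- faces of K contain U when nonempty, and their hats map back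
  have hSurj : ∀ G : Set (EuclideanSpace ℝ (Fin n)), IsFace K G → IsFace Khat (G ∩ (Usubᗮ : Set (EuclideanSpace ℝ (Fin n)))) ∧
      (G ∩ (Usubᗮ : Set (EuclideanSpace ℝ (Fin n)))) + U = G := by
    intro G hG
    obtain ⟨hGsub, hGconv, hGcone, hGface⟩ := hG
    have hUG : G.Nonempty → U ⊆ G := by
      rintro ⟨g, hg⟩ u hu
      have hnu : -u ∈ U := by
        rw [show -u = (-1 : ℝ) • u from (neg_one_smul ℝ _).symm]
        exact hUsmul _ _ hu
      have hgu : g + (-u) ∈ K := hKadd g (hGsub hg) _ (hUK hnu)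
      have : g + (-u) + u = g := by abel
      exact (hGface _ hgu u (hUK hu) (by rw [this]; exact hg)).2
    constructor
    · refine ⟨?_, hGconv.inter Usubᗮ.convex, ?_, ?_⟩
      · rw [hKhat']
        exact Set.inter_subset_inter_left _ hGsub
      · rintro x ⟨hxG, hxW⟩ t ht
        exact ⟨hGcone x hxG t ht, Submodule.smul_mem _ _ hxW⟩
      · rintro x hx y hy ⟨hxyG, _⟩
        rw [hKhat'] at hx hy
        obtain ⟨hfG, hgG⟩ := hGface x hx.1 y hy.1 hxyG
        exact ⟨⟨hfG, hx.2⟩, ⟨hgG, hy.2⟩⟩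
    · ext x
      constructor
      · intro hx
        obtain ⟨f, hf, u, hu, rfl⟩ := Set.mem_add.mp hx
        have hGne : G.Nonempty := ⟨f, hf.1⟩
        exact hKadd f (hGsub hf.1) u (hUK hu) |> fun _ => by
          have := hGconv
          exact hKadd f (hGsub hf.1) u (hUK hu) |> fun _ =>
            (by
              have hadd : ∀ a ∈ G, ∀ b ∈ G, a + b ∈ G := by
                intro a ha b hb
                have hmid := hGconv ha hb (by norm_num : (0:ℝ) ≤ 1/2)
                  (by norm_num : (0:ℝ) ≤ 1/2) (by norm_num)
                have h2 := hGcone _ hmid 2 (by norm_num)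
                have heq : (2:ℝ) • ((1/2 : ℝ) • a + (1/2 : ℝ) • b) = a + b := by
                  rw [smul_add, smul_smul, smul_smul]; norm_num
                rwa [heq] at h2
              exact hadd f hf.1 u (hUG hGne hu))
      · intro hx
        obtain ⟨f, hf, u, hu, hxd⟩ := hdecK x (hGsub hx)
        have hfG : f ∈ G := (hGface f (hKhatK hf) u (hUK hu) (hxd ▸ hx)).1
        rw [hxd]
        exact Set.add_mem_add ⟨hfG, hKhatW hf⟩ hu
  refine ⟨⟨?_, ?_, ?_⟩, ?_⟩
  · intro F hF
    exact hMapsTo F hF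
  · intro F1 h1 F2 h2 heq
    simp only [Set.mem_setOf_eq] at h1 h2
    rw [← hcap F1 h1, ← hcap F2 h2]
    simp only at heq
    rw [heq]
  · intro G hG
    simp only [Set.mem_setOf_eq] at hG
    obtain ⟨hface, heq⟩ := hSurj G hG
    exact ⟨G ∩ (Usubᗮ : Set (EuclideanSpace ℝ (Fin n))), hface, heq⟩
  · -- polyhedrality
    intro F hF
    constructor
    · rintro ⟨s, hs⟩
      refine ⟨s.image pw, ?_⟩
      have hselfadj : ∀ v x : EuclideanSpace ℝ (Fin n), (inner ℝ (pw v) x : ℝ) = inner ℝ v (pw x) := by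
        intro v x
        have e1 : (inner ℝ (pw v) (pu x) : ℝ) = 0 := by
          rw [real_inner_comm]; exact horthUW _ (hpu x) _ (hpw v)
        have h1 : (inner ℝ (pw v) x : ℝ) = inner ℝ (pw v) (pw x) := by
          have hx' : (inner ℝ (pw v) x : ℝ) = inner ℝ (pw v) (pu x + pw x) := by rw [← hsum x]
          rw [hx', inner_add_right, e1, zero_add]
        have h2 : (inner ℝ v (pw x) : ℝ) = inner ℝ (pw v) (pw x) := by
          have hv' : (inner ℝ v (pw x) : ℝ) = inner ℝ (pu v + pw v) (pw x) := by rw [← hsum v]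
          rw [hv', inner_add_left, horthUW _ (hpu v) _ (hpw x), zero_add]
        rw [h1, h2]
      ext x
      simp only [Set.mem_setOf_eq, Finset.mem_image]
      constructor
      · intro hx
        obtain ⟨f, hf, u, hu, hxd⟩ := Set.mem_add.mp hx
        rintro v ⟨v', hv', rfl⟩
        have hfW : f ∈ Usubᗮ := hKhatW (hF.1 hf)
        have hpwx : pw x = f := hpw_eq x f u hfW hu hxd.symm
        rw [hselfadj, hpwx]
        have := hs ▸ hf
        exact this v' hv'
      · intro hx
        have hpwF : pw x ∈ F := by
          rw [hs]
          intro v hv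
          rw [← hselfadj]
          exact hx (pw v) ⟨v, hv, rfl⟩
        rw [hsum x]
        rw [show pu x + pw x = pw x + pu x by abel]
        exact Set.add_mem_add hpwF (hpu x)
    · rintro ⟨s, hs⟩
      obtain ⟨t, ht⟩ := IsNoetherian.noetherian Usub
      refine ⟨s ∪ t ∪ t.image (fun v => -v), ?_⟩
      have htU : ∀ u ∈ t, u ∈ U := fun u hu => by
        rw [← hUsub, ← ht]; exact Submodule.subset_span hu
      ext x
      simp only [Set.mem_setOf_eq, Finset.mem_union, Finset.mem_image]
      constructor
      · intro hx
        have hxFU : x ∈ F + U := by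
          rw [show x = x + 0 by abel]; exact Set.add_mem_add hx h0U
        have hxW : x ∈ Usubᗮ := hKhatW (hF.1 hx)
        intro v hv
        rcases hv with (hv | hv) | ⟨v', hv', rfl⟩
        · exact (hs ▸ hxFU) v hv
        · rw [horthUW _ (htU v hv) _ hxW]
        · rw [inner_neg_left, horthUW _ (htU v' hv') _ hxW, neg_zero]
      · intro hx
        have hxFU : x ∈ F + U := by
          rw [hs]
          intro v hv
          exact hx v (Or.inl (Or.inl hv))
        have hxW : x ∈ Usubᗮ := by
          rw [Submodule.mem_orthogonal]
          intro u hu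
          rw [← ht] at hu
          induction hu using Submodule.span_induction with
          | mem v hv =>
            have h1 := hx v (Or.inl (Or.inr hv))
            have h2 := hx (-v) (Or.inr ⟨v, hv, rfl⟩)
            rw [inner_neg_left] at h2
            linarith
          | zero => exact inner_zero_left x
          | add a b _ _ ha hb => rw [inner_add_left, ha, hb, add_zero]
          | smul c a _ ha => rw [real_inner_smul_left, ha, mul_zero]
        have := hcap F hF
        rw [← this]
        exact ⟨hxFU, hxW⟩
end

section
/- Let K ⊆ R^n be a closed convex cone, A : R^n → R^m linear, c ∈ R^n. Suppose d_1 ∈ K* ∩ ker A ∩ {c}^⊥ with d_1 ∉ K^⊥, and d_1* ∈ ri(K* ∩ ker A ∩ {c}^⊥). Then K ∩ {d_1*}^⊥ ⊆ K ∩ {d_1}^⊥, and moreover d_1* ∉ K^⊥. If additionally d_1 ∈ ri(K* ∩ ker A ∩ {c}^⊥), then K ∩ {d_1*}^⊥ = K ∩ {d_1}^⊥. -/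
/-- From a relative interior point `u` of `C` and any `v ∈ C`, one can move slightly
beyond `u` away from `v` and stay in `C`. -/
lemma extend_beyond_ri {n : ℕ} (C : Set (EuclideanSpace ℝ (Fin n)))
    (u v : EuclideanSpace ℝ (Fin n))
    (hu : u ∈ intrinsicInterior ℝ C) (hv : v ∈ C) :
    ∃ t : ℝ, 0 < t ∧ u + t • (u - v) ∈ C := by
  obtain ⟨y, hy, hyu⟩ := mem_intrinsicInterior.mp hu
  rw [mem_interior_iff_mem_nhds, Metric.mem_nhds_iff] at hy
  obtain ⟨ε, hε, hball⟩ := hy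
  set t : ℝ := ε / (2 * (‖u - v‖ + 1)) with ht
  have hnorm : (0:ℝ) < ‖u - v‖ + 1 := by positivity
  have htpos : 0 < t := by positivity
  refine ⟨t, htpos, ?_⟩
  have huC : u ∈ C := intrinsicInterior_subset hu
  have huS : u ∈ affineSpan ℝ C := subset_affineSpan ℝ C huC
  have hvS : v ∈ affineSpan ℝ C := subset_affineSpan ℝ C hv
  have hzS : u + t • (u - v) ∈ affineSpan ℝ C := by
    have := (affineSpan ℝ C).smul_vsub_vadd_mem t huS hvS huS
    simpa [vsub_eq_sub, vadd_eq_add, add_comm] using this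
  set z : affineSpan ℝ C := ⟨u + t • (u - v), hzS⟩
  have hdist : dist z y < ε := by
    have hyu' : (y : EuclideanSpace ℝ (Fin n)) = u := hyu
    have : dist z y = dist (u + t • (u - v)) u := by
      rw [Subtype.dist_eq, hyu']
    rw [this, dist_eq_norm]
    have : u + t • (u - v) - u = t • (u - v) := by abel
    rw [this, norm_smul]
    calc ‖t‖ * ‖u - v‖ = t * ‖u - v‖ := by rw [Real.norm_of_nonneg htpos.le]
      _ ≤ t * (‖u - v‖ + 1) := by nlinarith [norm_nonneg (u - v)]
      _ = ε / (2 * (‖u - v‖ + 1)) * (‖u - v‖ + 1) := rfl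
      _ = ε / 2 := by field_simp
      _ < ε := by linarith
  have := hball hdist
  simpa using this

/-- Key orthogonality transfer: if `u` is in the relative interior of `C`,
`v ∈ C`, `C` consists of vectors in the dual cone of `K`, and `x ∈ K` is
orthogonal to `u`, then `x` is orthogonal to `v`. -/
lemma ortho_transfer {n : ℕ} (K C : Set (EuclideanSpace ℝ (Fin n)))
    (hCK : ∀ w ∈ C, w ∈ ProperCone.innerDual K)
    (u v : EuclideanSpace ℝ (Fin n))
    (hu : u ∈ intrinsicInterior ℝ C) (hv : v ∈ C)
    (x : EuclideanSpace ℝ (Fin n)) (hx : x ∈ K) (hux : (inner ℝ u x : ℝ) = 0) :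
    (inner ℝ v x : ℝ) = 0 := by
  obtain ⟨t, htpos, hz⟩ := extend_beyond_ri C u v hu hv
  have h1 : (0:ℝ) ≤ inner ℝ x (u + t • (u - v)) := ProperCone.mem_innerDual.mp (hCK _ hz) hx
  have h2 : (0:ℝ) ≤ inner ℝ x v := ProperCone.mem_innerDual.mp (hCK _ hv) hx
  have hsym : (inner ℝ x u : ℝ) = 0 := by rw [real_inner_comm]; exact hux
  have hexp : (inner ℝ x (u + t • (u - v)) : ℝ)
      = inner ℝ x u + t * (inner ℝ x u - inner ℝ x v) := by
    rw [inner_add_right, real_inner_smul_right, inner_sub_right]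
  rw [hexp, hsym] at h1
  have hvx : (inner ℝ x v : ℝ) = 0 := by nlinarith
  rw [real_inner_comm]; exact hvx

/-- Replacing a reducing direction `d₁` by a relative interior point `d₁*` of
`K* ∩ ker A ∩ {c}^⊥` yields a smaller (or equal) face; if `d₁` is itself a relative
interior point, the faces coincide. -/
theorem stmt16 {n m : ℕ} (K : Set (EuclideanSpace ℝ (Fin n)))
    (hK : IsClosedConvexCone K)
    (A : EuclideanSpace ℝ (Fin n) →ₗ[ℝ] EuclideanSpace ℝ (Fin m))
    (c d1 d1s : EuclideanSpace ℝ (Fin n))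
    (C : Set (EuclideanSpace ℝ (Fin n)))
    (hC : C = {x | x ∈ ProperCone.innerDual K ∧ A x = 0 ∧ (inner ℝ c x : ℝ) = 0})
    (hd1 : d1 ∈ C) (hd1n : ¬ ∀ y ∈ K, (inner ℝ d1 y : ℝ) = 0)
    (hd1s : d1s ∈ intrinsicInterior ℝ C) :
    (K ∩ {x | (inner ℝ d1s x : ℝ) = 0} ⊆ K ∩ {x | (inner ℝ d1 x : ℝ) = 0}) ∧
      (¬ ∀ y ∈ K, (inner ℝ d1s y : ℝ) = 0) ∧
      (d1 ∈ intrinsicInterior ℝ C →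
        K ∩ {x | (inner ℝ d1s x : ℝ) = 0} = K ∩ {x | (inner ℝ d1 x : ℝ) = 0}) := by
  have hCK : ∀ w ∈ C, w ∈ ProperCone.innerDual K := by
    intro w hw; rw [hC] at hw; exact hw.1
  have hsub : K ∩ {x | (inner ℝ d1s x : ℝ) = 0} ⊆ K ∩ {x | (inner ℝ d1 x : ℝ) = 0} := by
    rintro x ⟨hxK, hxo⟩
    exact ⟨hxK, ortho_transfer K C hCK d1s d1 hd1s hd1 x hxK hxo⟩
  refine ⟨hsub, ?_, ?_⟩
  · intro hall
    apply hd1n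
    intro y hy
    exact (hsub ⟨hy, hall y hy⟩).2
  · intro hd1i
    apply Set.Subset.antisymm hsub
    rintro x ⟨hxK, hxo⟩
    exact ⟨hxK, ortho_transfer K C hCK d1 d1s hd1i (intrinsicInterior_subset hd1s) x hxK hxo⟩
end
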